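/- Let V be a real inner product space of finite dimension n ≥ 4 and let R be an algebraic curvature tensor on V. If for every orthonormal four-frame {e₁,e₂,e₃,e₄} in V one has R(e₁,e₃,e₁,e₃) + R(e₁,e₄,e₁,e₄) + R(e₂,e₃,e₂,e₃) + R(e₂,e₄,e₂,e₄) > (1/2)·(R(e₁,e₂,e₁,e₂) + R(e₃,e₄,e₃,e₄)), then R has positive isotropic curvature, i.e. for every orthonormal four-frame {e₁,e₂,e₃,e₄} in V one has R(e₁,e₃,e₁,e₃) + R(e₁,e₄,e₁,e₄) + R(e₂,e₃,e₂,e₃) + R(e₂,e₄,e₂,e₄) − 2·R(e₁,e₂,e₃,e₄) > 0. -/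

import Mathlib

open scoped RealInnerProductSpace

variable {V : Type*} [NormedAddCommGroup V] [InnerProductSpace ℝ V]

/-- An algebraic curvature tensor on a real inner product space `V`:
an `ℝ`-multilinear map `V × V × V × V → ℝ` with the standard symmetries and
the first Bianchi identity. -/
def IsCurvatureTensor (R : V →ₗ[ℝ] V →ₗ[ℝ] V →ₗ[ℝ] V →ₗ[ℝ] ℝ) : Prop :=
  (∀ X Y Z W : V, R X Y Z W = - R Y X Z W) ∧
  (∀ X Y Z W : V, R X Y Z W = - R X Y W Z) ∧
  (∀ X Y Z W : V, R X Y Z W = R Z W X Y) ∧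
  (∀ X Y Z W : V, R X Y Z W + R X Z W Y + R X W Y Z = 0)

/-- An orthonormal four-frame: four pairwise orthogonal unit vectors. -/
def OrthonormalFrame4 (e₁ e₂ e₃ e₄ : V) : Prop :=
  ‖e₁‖ = 1 ∧ ‖e₂‖ = 1 ∧ ‖e₃‖ = 1 ∧ ‖e₄‖ = 1 ∧
  ⟪e₁, e₂⟫ = 0 ∧ ⟪e₁, e₃⟫ = 0 ∧ ⟪e₁, e₄⟫ = 0 ∧
  ⟪e₂, e₃⟫ = 0 ∧ ⟪e₂, e₄⟫ = 0 ∧ ⟪e₃, e₄⟫ = 0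


set_option maxHeartbeats 8000000 in
theorem stmt_0 {V : Type*} [NormedAddCommGroup V] [InnerProductSpace ℝ V]
    [FiniteDimensional ℝ V] (hdim : 4 ≤ Module.finrank ℝ V)
    (R : V →ₗ[ℝ] V →ₗ[ℝ] V →ₗ[ℝ] V →ₗ[ℝ] ℝ) (hR : IsCurvatureTensor R)
    (hyp : ∀ e₁ e₂ e₃ e₄ : V, OrthonormalFrame4 e₁ e₂ e₃ e₄ →
      R e₁ e₃ e₁ e₃ + R e₁ e₄ e₁ e₄ + R e₂ e₃ e₂ e₃ + R e₂ e₄ e₂ e₄ >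
        (1 / 2) * (R e₁ e₂ e₁ e₂ + R e₃ e₄ e₃ e₄)) :
    ∀ e₁ e₂ e₃ e₄ : V, OrthonormalFrame4 e₁ e₂ e₃ e₄ →
      R e₁ e₃ e₁ e₃ + R e₁ e₄ e₁ e₄ + R e₂ e₃ e₂ e₃ + R e₂ e₄ e₂ e₄
        - 2 * R e₁ e₂ e₃ e₄ > 0 := by
  obtain ⟨h1s, h2s, h3s, h4s⟩ := hR
  intro e₁ e₂ e₃ e₄ hf
  obtain ⟨hn1, hn2, hn3, hn4, h12, h13, h14, h23, h24, h34⟩ := hf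
  set a : ℝ := (Real.sqrt 2)⁻¹ with hadef
  have hs2 : Real.sqrt 2 ≠ 0 := by positivity
  have ha2 : a * a = 1 / 2 := by
    rw [hadef, ← mul_inv]
    rw [Real.mul_self_sqrt (by norm_num : (0:ℝ) ≤ 2)]
    norm_num
  have pull : ∀ X Y Z W : V, R (a • X) (a • Y) (a • Z) (a • W) = (1/4) * R X Y Z W := by
    intro X Y Z W
    simp only [map_smul, LinearMap.smul_apply, smul_eq_mul]
    linear_combination ((a*a + 1/2) * R X Y Z W) * ha2
  have hb := h4s e₁ e₂ e₃ e₄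
  have hb2 : R e₁ e₃ e₄ e₂ = - R e₁ e₃ e₂ e₄ := h2s e₁ e₃ e₄ e₂
  have s11 : ⟪e₁, e₁⟫ = 1 := by rw [real_inner_self_eq_norm_mul_norm, hn1]; norm_num
  have s22 : ⟪e₂, e₂⟫ = 1 := by rw [real_inner_self_eq_norm_mul_norm, hn2]; norm_num
  have s33 : ⟪e₃, e₃⟫ = 1 := by rw [real_inner_self_eq_norm_mul_norm, hn3]; norm_num
  have s44 : ⟪e₄, e₄⟫ = 1 := by rw [real_inner_self_eq_norm_mul_norm, hn4]; norm_num
  have h21 : ⟪e₂, e₁⟫ = 0 := by rw [real_inner_comm]; exact h12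
  have h31 : ⟪e₃, e₁⟫ = 0 := by rw [real_inner_comm]; exact h13
  have h41 : ⟪e₄, e₁⟫ = 0 := by rw [real_inner_comm]; exact h14
  have h32 : ⟪e₃, e₂⟫ = 0 := by rw [real_inner_comm]; exact h23
  have h42 : ⟪e₄, e₂⟫ = 0 := by rw [real_inner_comm]; exact h24
  have h43 : ⟪e₄, e₃⟫ = 0 := by rw [real_inner_comm]; exact h34
  have keynorm : ∀ x y : V, ‖x‖ = 1 → ‖y‖ = 1 → ⟪x, y⟫ = 0 → ‖a • (x + y)‖ = 1 := by
    intro x y hx hy hxy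
    have hxy2 : ‖x + y‖ = Real.sqrt 2 := by
      have h := norm_add_sq_real x y
      rw [hx, hy, hxy] at h
      have h2 : ‖x + y‖ ^ 2 = 2 := by linarith
      rw [show ‖x + y‖ = Real.sqrt (‖x + y‖ ^ 2) from
        (Real.sqrt_sq (norm_nonneg _)).symm, h2]
    rw [norm_smul, hxy2, hadef]
    have hn : ‖(Real.sqrt 2)⁻¹‖ = (Real.sqrt 2)⁻¹ := by
      rw [Real.norm_eq_abs, abs_of_nonneg (by positivity)]
    rw [hn, inv_mul_cancel₀ hs2]
  have keynorm' : ∀ x y : V, ‖x‖ = 1 → ‖y‖ = 1 → ⟪x, y⟫ = 0 → ‖a • (x - y)‖ = 1 := by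
    intro x y hx hy hxy
    have h := keynorm x (-y) hx (by rwa [norm_neg]) (by rw [inner_neg_right, hxy, neg_zero])
    rwa [← sub_eq_add_neg] at h
  have norA1 : ‖(a • (e₁ + e₃))‖ = 1 := keynorm e₁ e₃ hn1 hn3 h13
  have norA2 : ‖(a • (e₂ + e₄))‖ = 1 := keynorm e₂ e₄ hn2 hn4 h24
  have norA3 : ‖(a • (e₁ - e₃))‖ = 1 := keynorm' e₁ e₃ hn1 hn3 h13
  have norA4 : ‖(a • (e₂ - e₄))‖ = 1 := keynorm' e₂ e₄ hn2 hn4 h24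
  have innA12 : ⟪(a • (e₁ + e₃)), (a • (e₂ + e₄))⟫ = 0 := by
    simp only [inner_smul_left, inner_smul_right, inner_add_left, inner_add_right,
      inner_sub_left, inner_sub_right, s11, s22, s33, s44,
      h12, h13, h14, h23, h24, h34, h21, h31, h41, h32, h42, h43,
      RCLike.conj_to_real]
    ring
  have innA13 : ⟪(a • (e₁ + e₃)), (a • (e₁ - e₃))⟫ = 0 := by
    simp only [inner_smul_left, inner_smul_right, inner_add_left, inner_add_right,
      inner_sub_left, inner_sub_right, s11, s22, s33, s44,
      h12, h13, h14, h23, h24, h34, h21, h31, h41, h32, h42, h43,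
      RCLike.conj_to_real]
    ring
  have innA14 : ⟪(a • (e₁ + e₃)), (a • (e₂ - e₄))⟫ = 0 := by
    simp only [inner_smul_left, inner_smul_right, inner_add_left, inner_add_right,
      inner_sub_left, inner_sub_right, s11, s22, s33, s44,
      h12, h13, h14, h23, h24, h34, h21, h31, h41, h32, h42, h43,
      RCLike.conj_to_real]
    ring
  have innA23 : ⟪(a • (e₂ + e₄)), (a • (e₁ - e₃))⟫ = 0 := by
    simp only [inner_smul_left, inner_smul_right, inner_add_left, inner_add_right,
      inner_sub_left, inner_sub_right, s11, s22, s33, s44,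
      h12, h13, h14, h23, h24, h34, h21, h31, h41, h32, h42, h43,
      RCLike.conj_to_real]
    ring
  have innA24 : ⟪(a • (e₂ + e₄)), (a • (e₂ - e₄))⟫ = 0 := by
    simp only [inner_smul_left, inner_smul_right, inner_add_left, inner_add_right,
      inner_sub_left, inner_sub_right, s11, s22, s33, s44,
      h12, h13, h14, h23, h24, h34, h21, h31, h41, h32, h42, h43,
      RCLike.conj_to_real]
    ring
  have innA34 : ⟪(a • (e₁ - e₃)), (a • (e₂ - e₄))⟫ = 0 := by
    simp only [inner_smul_left, inner_smul_right, inner_add_left, inner_add_right,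
      inner_sub_left, inner_sub_right, s11, s22, s33, s44,
      h12, h13, h14, h23, h24, h34, h21, h31, h41, h32, h42, h43,
      RCLike.conj_to_real]
    ring
  have hypA := hyp (a • (e₁ + e₃)) (a • (e₂ + e₄)) (a • (e₁ - e₃)) (a • (e₂ - e₄))
    ⟨norA1, norA2, norA3, norA4, innA12, innA13, innA14, innA23, innA24, innA34⟩
  have norB1 : ‖(a • (e₁ + e₄))‖ = 1 := keynorm e₁ e₄ hn1 hn4 h14
  have norB2 : ‖(a • (e₂ - e₃))‖ = 1 := keynorm' e₂ e₃ hn2 hn3 h23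
  have norB3 : ‖(a • (e₁ - e₄))‖ = 1 := keynorm' e₁ e₄ hn1 hn4 h14
  have norB4 : ‖(a • (e₂ + e₃))‖ = 1 := keynorm e₂ e₃ hn2 hn3 h23
  have innB12 : ⟪(a • (e₁ + e₄)), (a • (e₂ - e₃))⟫ = 0 := by
    simp only [inner_smul_left, inner_smul_right, inner_add_left, inner_add_right,
      inner_sub_left, inner_sub_right, s11, s22, s33, s44,
      h12, h13, h14, h23, h24, h34, h21, h31, h41, h32, h42, h43,
      RCLike.conj_to_real]
    ring
  have innB13 : ⟪(a • (e₁ + e₄)), (a • (e₁ - e₄))⟫ = 0 := by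
    simp only [inner_smul_left, inner_smul_right, inner_add_left, inner_add_right,
      inner_sub_left, inner_sub_right, s11, s22, s33, s44,
      h12, h13, h14, h23, h24, h34, h21, h31, h41, h32, h42, h43,
      RCLike.conj_to_real]
    ring
  have innB14 : ⟪(a • (e₁ + e₄)), (a • (e₂ + e₃))⟫ = 0 := by
    simp only [inner_smul_left, inner_smul_right, inner_add_left, inner_add_right,
      inner_sub_left, inner_sub_right, s11, s22, s33, s44,
      h12, h13, h14, h23, h24, h34, h21, h31, h41, h32, h42, h43,
      RCLike.conj_to_real]
    ring
  have innB23 : ⟪(a • (e₂ - e₃)), (a • (e₁ - e₄))⟫ = 0 := by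
    simp only [inner_smul_left, inner_smul_right, inner_add_left, inner_add_right,
      inner_sub_left, inner_sub_right, s11, s22, s33, s44,
      h12, h13, h14, h23, h24, h34, h21, h31, h41, h32, h42, h43,
      RCLike.conj_to_real]
    ring
  have innB24 : ⟪(a • (e₂ - e₃)), (a • (e₂ + e₃))⟫ = 0 := by
    simp only [inner_smul_left, inner_smul_right, inner_add_left, inner_add_right,
      inner_sub_left, inner_sub_right, s11, s22, s33, s44,
      h12, h13, h14, h23, h24, h34, h21, h31, h41, h32, h42, h43,
      RCLike.conj_to_real]
    ring
  have innB34 : ⟪(a • (e₁ - e₄)), (a • (e₂ + e₃))⟫ = 0 := by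
    simp only [inner_smul_left, inner_smul_right, inner_add_left, inner_add_right,
      inner_sub_left, inner_sub_right, s11, s22, s33, s44,
      h12, h13, h14, h23, h24, h34, h21, h31, h41, h32, h42, h43,
      RCLike.conj_to_real]
    ring
  have hypB := hyp (a • (e₁ + e₄)) (a • (e₂ - e₃)) (a • (e₁ - e₄)) (a • (e₂ + e₃))
    ⟨norB1, norB2, norB3, norB4, innB12, innB13, innB14, innB23, innB24, innB34⟩
  have hs : ∀ x y z w u : V, R (x - y) z w u = R x z w u - R y z w u := by
    intro x y z w u
    have h := LinearMap.map_add R (x - y) y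
    rw [sub_add_cancel] at h
    rw [h, LinearMap.add_apply, LinearMap.add_apply, LinearMap.add_apply]
    ring
  have eA13 : R (e₁ + e₃) (e₁ - e₃) (e₁ + e₃) (e₁ - e₃) = (R e₁ e₁ e₁ e₁ - R e₁ e₁ e₁ e₃ + R e₁ e₁ e₃ e₁ - R e₁ e₁ e₃ e₃ - R e₁ e₃ e₁ e₁ + R e₁ e₃ e₁ e₃ - R e₁ e₃ e₃ e₁ + R e₁ e₃ e₃ e₃ + R e₃ e₁ e₁ e₁ - R e₃ e₁ e₁ e₃ + R e₃ e₁ e₃ e₁ - R e₃ e₁ e₃ e₃ - R e₃ e₃ e₁ e₁ + R e₃ e₃ e₁ e₃ - R e₃ e₃ e₃ e₁ + R e₃ e₃ e₃ e₃) := by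
    simp only [map_add, map_sub, LinearMap.add_apply, LinearMap.sub_apply]
    ring
  have expA13 : R (a • (e₁ + e₃)) (a • (e₁ - e₃)) (a • (e₁ + e₃)) (a • (e₁ - e₃)) = (1/4) * (R e₁ e₁ e₁ e₁ - R e₁ e₁ e₁ e₃ + R e₁ e₁ e₃ e₁ - R e₁ e₁ e₃ e₃ - R e₁ e₃ e₁ e₁ + R e₁ e₃ e₁ e₃ - R e₁ e₃ e₃ e₁ + R e₁ e₃ e₃ e₃ + R e₃ e₁ e₁ e₁ - R e₃ e₁ e₁ e₃ + R e₃ e₁ e₃ e₁ - R e₃ e₁ e₃ e₃ - R e₃ e₃ e₁ e₁ + R e₃ e₃ e₁ e₃ - R e₃ e₃ e₃ e₁ + R e₃ e₃ e₃ e₃) := by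
    rw [pull, eA13]
  have eA14 : R (e₁ + e₃) (e₂ - e₄) (e₁ + e₃) (e₂ - e₄) = (R e₁ e₂ e₁ e₂ - R e₁ e₂ e₁ e₄ + R e₁ e₂ e₃ e₂ - R e₁ e₂ e₃ e₄ - R e₁ e₄ e₁ e₂ + R e₁ e₄ e₁ e₄ - R e₁ e₄ e₃ e₂ + R e₁ e₄ e₃ e₄ + R e₃ e₂ e₁ e₂ - R e₃ e₂ e₁ e₄ + R e₃ e₂ e₃ e₂ - R e₃ e₂ e₃ e₄ - R e₃ e₄ e₁ e₂ + R e₃ e₄ e₁ e₄ - R e₃ e₄ e₃ e₂ + R e₃ e₄ e₃ e₄) := by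
    simp only [map_add, map_sub, LinearMap.add_apply, LinearMap.sub_apply]
    ring
  have expA14 : R (a • (e₁ + e₃)) (a • (e₂ - e₄)) (a • (e₁ + e₃)) (a • (e₂ - e₄)) = (1/4) * (R e₁ e₂ e₁ e₂ - R e₁ e₂ e₁ e₄ + R e₁ e₂ e₃ e₂ - R e₁ e₂ e₃ e₄ - R e₁ e₄ e₁ e₂ + R e₁ e₄ e₁ e₄ - R e₁ e₄ e₃ e₂ + R e₁ e₄ e₃ e₄ + R e₃ e₂ e₁ e₂ - R e₃ e₂ e₁ e₄ + R e₃ e₂ e₃ e₂ - R e₃ e₂ e₃ e₄ - R e₃ e₄ e₁ e₂ + R e₃ e₄ e₁ e₄ - R e₃ e₄ e₃ e₂ + R e₃ e₄ e₃ e₄) := by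
    rw [pull, eA14]
  have eA23 : R (e₂ + e₄) (e₁ - e₃) (e₂ + e₄) (e₁ - e₃) = (R e₂ e₁ e₂ e₁ - R e₂ e₁ e₂ e₃ + R e₂ e₁ e₄ e₁ - R e₂ e₁ e₄ e₃ - R e₂ e₃ e₂ e₁ + R e₂ e₃ e₂ e₃ - R e₂ e₃ e₄ e₁ + R e₂ e₃ e₄ e₃ + R e₄ e₁ e₂ e₁ - R e₄ e₁ e₂ e₃ + R e₄ e₁ e₄ e₁ - R e₄ e₁ e₄ e₃ - R e₄ e₃ e₂ e₁ + R e₄ e₃ e₂ e₃ - R e₄ e₃ e₄ e₁ + R e₄ e₃ e₄ e₃) := by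
    simp only [map_add, map_sub, LinearMap.add_apply, LinearMap.sub_apply]
    ring
  have expA23 : R (a • (e₂ + e₄)) (a • (e₁ - e₃)) (a • (e₂ + e₄)) (a • (e₁ - e₃)) = (1/4) * (R e₂ e₁ e₂ e₁ - R e₂ e₁ e₂ e₃ + R e₂ e₁ e₄ e₁ - R e₂ e₁ e₄ e₃ - R e₂ e₃ e₂ e₁ + R e₂ e₃ e₂ e₃ - R e₂ e₃ e₄ e₁ + R e₂ e₃ e₄ e₃ + R e₄ e₁ e₂ e₁ - R e₄ e₁ e₂ e₃ + R e₄ e₁ e₄ e₁ - R e₄ e₁ e₄ e₃ - R e₄ e₃ e₂ e₁ + R e₄ e₃ e₂ e₃ - R e₄ e₃ e₄ e₁ + R e₄ e₃ e₄ e₃) := by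
    rw [pull, eA23]
  have eA24 : R (e₂ + e₄) (e₂ - e₄) (e₂ + e₄) (e₂ - e₄) = (R e₂ e₂ e₂ e₂ - R e₂ e₂ e₂ e₄ + R e₂ e₂ e₄ e₂ - R e₂ e₂ e₄ e₄ - R e₂ e₄ e₂ e₂ + R e₂ e₄ e₂ e₄ - R e₂ e₄ e₄ e₂ + R e₂ e₄ e₄ e₄ + R e₄ e₂ e₂ e₂ - R e₄ e₂ e₂ e₄ + R e₄ e₂ e₄ e₂ - R e₄ e₂ e₄ e₄ - R e₄ e₄ e₂ e₂ + R e₄ e₄ e₂ e₄ - R e₄ e₄ e₄ e₂ + R e₄ e₄ e₄ e₄) := by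
    simp only [map_add, map_sub, LinearMap.add_apply, LinearMap.sub_apply]
    ring
  have expA24 : R (a • (e₂ + e₄)) (a • (e₂ - e₄)) (a • (e₂ + e₄)) (a • (e₂ - e₄)) = (1/4) * (R e₂ e₂ e₂ e₂ - R e₂ e₂ e₂ e₄ + R e₂ e₂ e₄ e₂ - R e₂ e₂ e₄ e₄ - R e₂ e₄ e₂ e₂ + R e₂ e₄ e₂ e₄ - R e₂ e₄ e₄ e₂ + R e₂ e₄ e₄ e₄ + R e₄ e₂ e₂ e₂ - R e₄ e₂ e₂ e₄ + R e₄ e₂ e₄ e₂ - R e₄ e₂ e₄ e₄ - R e₄ e₄ e₂ e₂ + R e₄ e₄ e₂ e₄ - R e₄ e₄ e₄ e₂ + R e₄ e₄ e₄ e₄) := by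
    rw [pull, eA24]
  have eA12 : R (e₁ + e₃) (e₂ + e₄) (e₁ + e₃) (e₂ + e₄) = (R e₁ e₂ e₁ e₂ + R e₁ e₂ e₁ e₄ + R e₁ e₂ e₃ e₂ + R e₁ e₂ e₃ e₄ + R e₁ e₄ e₁ e₂ + R e₁ e₄ e₁ e₄ + R e₁ e₄ e₃ e₂ + R e₁ e₄ e₃ e₄ + R e₃ e₂ e₁ e₂ + R e₃ e₂ e₁ e₄ + R e₃ e₂ e₃ e₂ + R e₃ e₂ e₃ e₄ + R e₃ e₄ e₁ e₂ + R e₃ e₄ e₁ e₄ + R e₃ e₄ e₃ e₂ + R e₃ e₄ e₃ e₄) := by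
    simp only [map_add, map_sub, LinearMap.add_apply, LinearMap.sub_apply]
    ring
  have expA12 : R (a • (e₁ + e₃)) (a • (e₂ + e₄)) (a • (e₁ + e₃)) (a • (e₂ + e₄)) = (1/4) * (R e₁ e₂ e₁ e₂ + R e₁ e₂ e₁ e₄ + R e₁ e₂ e₃ e₂ + R e₁ e₂ e₃ e₄ + R e₁ e₄ e₁ e₂ + R e₁ e₄ e₁ e₄ + R e₁ e₄ e₃ e₂ + R e₁ e₄ e₃ e₄ + R e₃ e₂ e₁ e₂ + R e₃ e₂ e₁ e₄ + R e₃ e₂ e₃ e₂ + R e₃ e₂ e₃ e₄ + R e₃ e₄ e₁ e₂ + R e₃ e₄ e₁ e₄ + R e₃ e₄ e₃ e₂ + R e₃ e₄ e₃ e₄) := by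
    rw [pull, eA12]
  have eA34 : R (e₁ - e₃) (e₂ - e₄) (e₁ - e₃) (e₂ - e₄) = (R e₁ e₂ e₁ e₂ - R e₁ e₂ e₁ e₄ - R e₁ e₂ e₃ e₂ + R e₁ e₂ e₃ e₄ - R e₁ e₄ e₁ e₂ + R e₁ e₄ e₁ e₄ + R e₁ e₄ e₃ e₂ - R e₁ e₄ e₃ e₄ - R e₃ e₂ e₁ e₂ + R e₃ e₂ e₁ e₄ + R e₃ e₂ e₃ e₂ - R e₃ e₂ e₃ e₄ + R e₃ e₄ e₁ e₂ - R e₃ e₄ e₁ e₄ - R e₃ e₄ e₃ e₂ + R e₃ e₄ e₃ e₄) := by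
    simp only [hs]
    simp only [map_add, map_sub, LinearMap.add_apply, LinearMap.sub_apply]
    ring
  have expA34 : R (a • (e₁ - e₃)) (a • (e₂ - e₄)) (a • (e₁ - e₃)) (a • (e₂ - e₄)) = (1/4) * (R e₁ e₂ e₁ e₂ - R e₁ e₂ e₁ e₄ - R e₁ e₂ e₃ e₂ + R e₁ e₂ e₃ e₄ - R e₁ e₄ e₁ e₂ + R e₁ e₄ e₁ e₄ + R e₁ e₄ e₃ e₂ - R e₁ e₄ e₃ e₄ - R e₃ e₂ e₁ e₂ + R e₃ e₂ e₁ e₄ + R e₃ e₂ e₃ e₂ - R e₃ e₂ e₃ e₄ + R e₃ e₄ e₁ e₂ - R e₃ e₄ e₁ e₄ - R e₃ e₄ e₃ e₂ + R e₃ e₄ e₃ e₄) := by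
    rw [pull, eA34]
  have eB13 : R (e₁ + e₄) (e₁ - e₄) (e₁ + e₄) (e₁ - e₄) = (R e₁ e₁ e₁ e₁ - R e₁ e₁ e₁ e₄ + R e₁ e₁ e₄ e₁ - R e₁ e₁ e₄ e₄ - R e₁ e₄ e₁ e₁ + R e₁ e₄ e₁ e₄ - R e₁ e₄ e₄ e₁ + R e₁ e₄ e₄ e₄ + R e₄ e₁ e₁ e₁ - R e₄ e₁ e₁ e₄ + R e₄ e₁ e₄ e₁ - R e₄ e₁ e₄ e₄ - R e₄ e₄ e₁ e₁ + R e₄ e₄ e₁ e₄ - R e₄ e₄ e₄ e₁ + R e₄ e₄ e₄ e₄) := by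
    simp only [map_add, map_sub, LinearMap.add_apply, LinearMap.sub_apply]
    ring
  have expB13 : R (a • (e₁ + e₄)) (a • (e₁ - e₄)) (a • (e₁ + e₄)) (a • (e₁ - e₄)) = (1/4) * (R e₁ e₁ e₁ e₁ - R e₁ e₁ e₁ e₄ + R e₁ e₁ e₄ e₁ - R e₁ e₁ e₄ e₄ - R e₁ e₄ e₁ e₁ + R e₁ e₄ e₁ e₄ - R e₁ e₄ e₄ e₁ + R e₁ e₄ e₄ e₄ + R e₄ e₁ e₁ e₁ - R e₄ e₁ e₁ e₄ + R e₄ e₁ e₄ e₁ - R e₄ e₁ e₄ e₄ - R e₄ e₄ e₁ e₁ + R e₄ e₄ e₁ e₄ - R e₄ e₄ e₄ e₁ + R e₄ e₄ e₄ e₄) := by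
    rw [pull, eB13]
  have eB14 : R (e₁ + e₄) (e₂ + e₃) (e₁ + e₄) (e₂ + e₃) = (R e₁ e₂ e₁ e₂ + R e₁ e₂ e₁ e₃ + R e₁ e₂ e₄ e₂ + R e₁ e₂ e₄ e₃ + R e₁ e₃ e₁ e₂ + R e₁ e₃ e₁ e₃ + R e₁ e₃ e₄ e₂ + R e₁ e₃ e₄ e₃ + R e₄ e₂ e₁ e₂ + R e₄ e₂ e₁ e₃ + R e₄ e₂ e₄ e₂ + R e₄ e₂ e₄ e₃ + R e₄ e₃ e₁ e₂ + R e₄ e₃ e₁ e₃ + R e₄ e₃ e₄ e₂ + R e₄ e₃ e₄ e₃) := by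
    simp only [map_add, map_sub, LinearMap.add_apply, LinearMap.sub_apply]
    ring
  have expB14 : R (a • (e₁ + e₄)) (a • (e₂ + e₃)) (a • (e₁ + e₄)) (a • (e₂ + e₃)) = (1/4) * (R e₁ e₂ e₁ e₂ + R e₁ e₂ e₁ e₃ + R e₁ e₂ e₄ e₂ + R e₁ e₂ e₄ e₃ + R e₁ e₃ e₁ e₂ + R e₁ e₃ e₁ e₃ + R e₁ e₃ e₄ e₂ + R e₁ e₃ e₄ e₃ + R e₄ e₂ e₁ e₂ + R e₄ e₂ e₁ e₃ + R e₄ e₂ e₄ e₂ + R e₄ e₂ e₄ e₃ + R e₄ e₃ e₁ e₂ + R e₄ e₃ e₁ e₃ + R e₄ e₃ e₄ e₂ + R e₄ e₃ e₄ e₃) := by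
    rw [pull, eB14]
  have eB23 : R (e₂ - e₃) (e₁ - e₄) (e₂ - e₃) (e₁ - e₄) = (R e₂ e₁ e₂ e₁ - R e₂ e₁ e₂ e₄ - R e₂ e₁ e₃ e₁ + R e₂ e₁ e₃ e₄ - R e₂ e₄ e₂ e₁ + R e₂ e₄ e₂ e₄ + R e₂ e₄ e₃ e₁ - R e₂ e₄ e₃ e₄ - R e₃ e₁ e₂ e₁ + R e₃ e₁ e₂ e₄ + R e₃ e₁ e₃ e₁ - R e₃ e₁ e₃ e₄ + R e₃ e₄ e₂ e₁ - R e₃ e₄ e₂ e₄ - R e₃ e₄ e₃ e₁ + R e₃ e₄ e₃ e₄) := by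
    simp only [hs]
    simp only [map_add, map_sub, LinearMap.add_apply, LinearMap.sub_apply]
    ring
  have expB23 : R (a • (e₂ - e₃)) (a • (e₁ - e₄)) (a • (e₂ - e₃)) (a • (e₁ - e₄)) = (1/4) * (R e₂ e₁ e₂ e₁ - R e₂ e₁ e₂ e₄ - R e₂ e₁ e₃ e₁ + R e₂ e₁ e₃ e₄ - R e₂ e₄ e₂ e₁ + R e₂ e₄ e₂ e₄ + R e₂ e₄ e₃ e₁ - R e₂ e₄ e₃ e₄ - R e₃ e₁ e₂ e₁ + R e₃ e₁ e₂ e₄ + R e₃ e₁ e₃ e₁ - R e₃ e₁ e₃ e₄ + R e₃ e₄ e₂ e₁ - R e₃ e₄ e₂ e₄ - R e₃ e₄ e₃ e₁ + R e₃ e₄ e₃ e₄) := by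
    rw [pull, eB23]
  have eB24 : R (e₂ - e₃) (e₂ + e₃) (e₂ - e₃) (e₂ + e₃) = (R e₂ e₂ e₂ e₂ + R e₂ e₂ e₂ e₃ - R e₂ e₂ e₃ e₂ - R e₂ e₂ e₃ e₃ + R e₂ e₃ e₂ e₂ + R e₂ e₃ e₂ e₃ - R e₂ e₃ e₃ e₂ - R e₂ e₃ e₃ e₃ - R e₃ e₂ e₂ e₂ - R e₃ e₂ e₂ e₃ + R e₃ e₂ e₃ e₂ + R e₃ e₂ e₃ e₃ - R e₃ e₃ e₂ e₂ - R e₃ e₃ e₂ e₃ + R e₃ e₃ e₃ e₂ + R e₃ e₃ e₃ e₃) := by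
    simp only [hs]
    simp only [map_add, map_sub, LinearMap.add_apply, LinearMap.sub_apply]
    ring
  have expB24 : R (a • (e₂ - e₃)) (a • (e₂ + e₃)) (a • (e₂ - e₃)) (a • (e₂ + e₃)) = (1/4) * (R e₂ e₂ e₂ e₂ + R e₂ e₂ e₂ e₃ - R e₂ e₂ e₃ e₂ - R e₂ e₂ e₃ e₃ + R e₂ e₃ e₂ e₂ + R e₂ e₃ e₂ e₃ - R e₂ e₃ e₃ e₂ - R e₂ e₃ e₃ e₃ - R e₃ e₂ e₂ e₂ - R e₃ e₂ e₂ e₃ + R e₃ e₂ e₃ e₂ + R e₃ e₂ e₃ e₃ - R e₃ e₃ e₂ e₂ - R e₃ e₃ e₂ e₃ + R e₃ e₃ e₃ e₂ + R e₃ e₃ e₃ e₃) := by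
    rw [pull, eB24]
  have eB12 : R (e₁ + e₄) (e₂ - e₃) (e₁ + e₄) (e₂ - e₃) = (R e₁ e₂ e₁ e₂ - R e₁ e₂ e₁ e₃ + R e₁ e₂ e₄ e₂ - R e₁ e₂ e₄ e₃ - R e₁ e₃ e₁ e₂ + R e₁ e₃ e₁ e₃ - R e₁ e₃ e₄ e₂ + R e₁ e₃ e₄ e₃ + R e₄ e₂ e₁ e₂ - R e₄ e₂ e₁ e₃ + R e₄ e₂ e₄ e₂ - R e₄ e₂ e₄ e₃ - R e₄ e₃ e₁ e₂ + R e₄ e₃ e₁ e₃ - R e₄ e₃ e₄ e₂ + R e₄ e₃ e₄ e₃) := by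
    simp only [map_add, map_sub, LinearMap.add_apply, LinearMap.sub_apply]
    ring
  have expB12 : R (a • (e₁ + e₄)) (a • (e₂ - e₃)) (a • (e₁ + e₄)) (a • (e₂ - e₃)) = (1/4) * (R e₁ e₂ e₁ e₂ - R e₁ e₂ e₁ e₃ + R e₁ e₂ e₄ e₂ - R e₁ e₂ e₄ e₃ - R e₁ e₃ e₁ e₂ + R e₁ e₃ e₁ e₃ - R e₁ e₃ e₄ e₂ + R e₁ e₃ e₄ e₃ + R e₄ e₂ e₁ e₂ - R e₄ e₂ e₁ e₃ + R e₄ e₂ e₄ e₂ - R e₄ e₂ e₄ e₃ - R e₄ e₃ e₁ e₂ + R e₄ e₃ e₁ e₃ - R e₄ e₃ e₄ e₂ + R e₄ e₃ e₄ e₃) := by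
    rw [pull, eB12]
  have eB34 : R (e₁ - e₄) (e₂ + e₃) (e₁ - e₄) (e₂ + e₃) = (R e₁ e₂ e₁ e₂ + R e₁ e₂ e₁ e₃ - R e₁ e₂ e₄ e₂ - R e₁ e₂ e₄ e₃ + R e₁ e₃ e₁ e₂ + R e₁ e₃ e₁ e₃ - R e₁ e₃ e₄ e₂ - R e₁ e₃ e₄ e₃ - R e₄ e₂ e₁ e₂ - R e₄ e₂ e₁ e₃ + R e₄ e₂ e₄ e₂ + R e₄ e₂ e₄ e₃ - R e₄ e₃ e₁ e₂ - R e₄ e₃ e₁ e₃ + R e₄ e₃ e₄ e₂ + R e₄ e₃ e₄ e₃) := by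
    simp only [hs]
    simp only [map_add, map_sub, LinearMap.add_apply, LinearMap.sub_apply]
    ring
  have expB34 : R (a • (e₁ - e₄)) (a • (e₂ + e₃)) (a • (e₁ - e₄)) (a • (e₂ + e₃)) = (1/4) * (R e₁ e₂ e₁ e₂ + R e₁ e₂ e₁ e₃ - R e₁ e₂ e₄ e₂ - R e₁ e₂ e₄ e₃ + R e₁ e₃ e₁ e₂ + R e₁ e₃ e₁ e₃ - R e₁ e₃ e₄ e₂ - R e₁ e₃ e₄ e₃ - R e₄ e₂ e₁ e₂ - R e₄ e₂ e₁ e₃ + R e₄ e₂ e₄ e₂ + R e₄ e₂ e₄ e₃ - R e₄ e₃ e₁ e₂ - R e₄ e₃ e₁ e₃ + R e₄ e₃ e₄ e₂ + R e₄ e₃ e₄ e₃) := by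
    rw [pull, eB34]
  have eq1111 : R e₁ e₁ e₁ e₁ = 0 := by linarith only [h1s e₁ e₁ e₁ e₁]
  have eq1113 : R e₁ e₁ e₁ e₃ = 0 := by linarith only [h1s e₁ e₁ e₁ e₃]
  have eq1114 : R e₁ e₁ e₁ e₄ = 0 := by linarith only [h1s e₁ e₁ e₁ e₄]
  have eq1131 : R e₁ e₁ e₃ e₁ = 0 := by linarith only [h1s e₁ e₁ e₃ e₁]
  have eq1133 : R e₁ e₁ e₃ e₃ = 0 := by linarith only [h1s e₁ e₁ e₃ e₃]
  have eq1141 : R e₁ e₁ e₄ e₁ = 0 := by linarith only [h1s e₁ e₁ e₄ e₁]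
  have eq1144 : R e₁ e₁ e₄ e₄ = 0 := by linarith only [h1s e₁ e₁ e₄ e₄]
  have eq1213 : R e₁ e₂ e₁ e₃ = R e₁ e₂ e₁ e₃ := by rw [h3s]
  have eq1214 : R e₁ e₂ e₁ e₄ = R e₁ e₂ e₁ e₄ := by rw [h3s]
  have eq1232 : R e₁ e₂ e₃ e₂ = - R e₁ e₂ e₂ e₃ := by rw [h2s e₁ e₂ e₃ e₂]
  have eq1234 : R e₁ e₂ e₃ e₄ = R e₁ e₃ e₂ e₄ - R e₁ e₄ e₂ e₃ := by linarith only [hb, hb2]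
  have eq1242 : R e₁ e₂ e₄ e₂ = - R e₁ e₂ e₂ e₄ := by rw [h2s e₁ e₂ e₄ e₂]
  have eq1243 : R e₁ e₂ e₄ e₃ = -(R e₁ e₃ e₂ e₄ - R e₁ e₄ e₂ e₃) := by linarith only [h2s e₁ e₂ e₄ e₃, hb, hb2]
  have eq1311 : R e₁ e₃ e₁ e₁ = 0 := by linarith only [h2s e₁ e₃ e₁ e₁]
  have eq1312 : R e₁ e₃ e₁ e₂ = R e₁ e₂ e₁ e₃ := by rw [h3s e₁ e₃ e₁ e₂]
  have eq1331 : R e₁ e₃ e₃ e₁ = - R e₁ e₃ e₁ e₃ := by rw [h2s e₁ e₃ e₃ e₁]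
  have eq1333 : R e₁ e₃ e₃ e₃ = 0 := by linarith only [h2s e₁ e₃ e₃ e₃]
  have eq1342 : R e₁ e₃ e₄ e₂ = - R e₁ e₃ e₂ e₄ := by rw [h2s e₁ e₃ e₄ e₂]
  have eq1343 : R e₁ e₃ e₄ e₃ = - R e₁ e₃ e₃ e₄ := by rw [h2s e₁ e₃ e₄ e₃]
  have eq1411 : R e₁ e₄ e₁ e₁ = 0 := by linarith only [h2s e₁ e₄ e₁ e₁]
  have eq1412 : R e₁ e₄ e₁ e₂ = R e₁ e₂ e₁ e₄ := by rw [h3s e₁ e₄ e₁ e₂]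
  have eq1432 : R e₁ e₄ e₃ e₂ = - R e₁ e₄ e₂ e₃ := by rw [h2s e₁ e₄ e₃ e₂]
  have eq1434 : R e₁ e₄ e₃ e₄ = R e₁ e₄ e₃ e₄ := by rw [h3s]
  have eq1441 : R e₁ e₄ e₄ e₁ = - R e₁ e₄ e₁ e₄ := by rw [h2s e₁ e₄ e₄ e₁]
  have eq1444 : R e₁ e₄ e₄ e₄ = 0 := by linarith only [h2s e₁ e₄ e₄ e₄]
  have eq2121 : R e₂ e₁ e₂ e₁ = R e₁ e₂ e₁ e₂ := by rw [h1s e₂ e₁ e₂ e₁, h2s e₁ e₂ e₂ e₁, neg_neg]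
  have eq2123 : R e₂ e₁ e₂ e₃ = - R e₁ e₂ e₂ e₃ := by rw [h1s e₂ e₁ e₂ e₃]
  have eq2124 : R e₂ e₁ e₂ e₄ = - R e₁ e₂ e₂ e₄ := by rw [h1s e₂ e₁ e₂ e₄]
  have eq2131 : R e₂ e₁ e₃ e₁ = R e₁ e₂ e₁ e₃ := by rw [h1s e₂ e₁ e₃ e₁, h2s e₁ e₂ e₃ e₁, neg_neg]
  have eq2134 : R e₂ e₁ e₃ e₄ = -(R e₁ e₃ e₂ e₄ - R e₁ e₄ e₂ e₃) := by linarith only [h1s e₂ e₁ e₃ e₄, hb, hb2]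
  have eq2141 : R e₂ e₁ e₄ e₁ = R e₁ e₂ e₁ e₄ := by rw [h1s e₂ e₁ e₄ e₁, h2s e₁ e₂ e₄ e₁, neg_neg]
  have eq2143 : R e₂ e₁ e₄ e₃ = R e₁ e₃ e₂ e₄ - R e₁ e₄ e₂ e₃ := by linarith only [h1s e₂ e₁ e₄ e₃, h2s e₁ e₂ e₄ e₃, hb, hb2]
  have eq2222 : R e₂ e₂ e₂ e₂ = 0 := by linarith only [h1s e₂ e₂ e₂ e₂]
  have eq2223 : R e₂ e₂ e₂ e₃ = 0 := by linarith only [h1s e₂ e₂ e₂ e₃]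
  have eq2224 : R e₂ e₂ e₂ e₄ = 0 := by linarith only [h1s e₂ e₂ e₂ e₄]
  have eq2232 : R e₂ e₂ e₃ e₂ = 0 := by linarith only [h1s e₂ e₂ e₃ e₂]
  have eq2233 : R e₂ e₂ e₃ e₃ = 0 := by linarith only [h1s e₂ e₂ e₃ e₃]
  have eq2242 : R e₂ e₂ e₄ e₂ = 0 := by linarith only [h1s e₂ e₂ e₄ e₂]
  have eq2244 : R e₂ e₂ e₄ e₄ = 0 := by linarith only [h1s e₂ e₂ e₄ e₄]
  have eq2321 : R e₂ e₃ e₂ e₁ = - R e₁ e₂ e₂ e₃ := by rw [h2s e₂ e₃ e₂ e₁, h3s e₂ e₃ e₁ e₂]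
  have eq2322 : R e₂ e₃ e₂ e₂ = 0 := by linarith only [h2s e₂ e₃ e₂ e₂]
  have eq2332 : R e₂ e₃ e₃ e₂ = - R e₂ e₃ e₂ e₃ := by rw [h2s e₂ e₃ e₃ e₂]
  have eq2333 : R e₂ e₃ e₃ e₃ = 0 := by linarith only [h2s e₂ e₃ e₃ e₃]
  have eq2341 : R e₂ e₃ e₄ e₁ = - R e₁ e₄ e₂ e₃ := by rw [h2s e₂ e₃ e₄ e₁, h3s e₂ e₃ e₁ e₄]
  have eq2343 : R e₂ e₃ e₄ e₃ = - R e₂ e₃ e₃ e₄ := by rw [h2s e₂ e₃ e₄ e₃]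
  have eq2421 : R e₂ e₄ e₂ e₁ = - R e₁ e₂ e₂ e₄ := by rw [h2s e₂ e₄ e₂ e₁, h3s e₂ e₄ e₁ e₂]
  have eq2422 : R e₂ e₄ e₂ e₂ = 0 := by linarith only [h2s e₂ e₄ e₂ e₂]
  have eq2431 : R e₂ e₄ e₃ e₁ = - R e₁ e₃ e₂ e₄ := by rw [h2s e₂ e₄ e₃ e₁, h3s e₂ e₄ e₁ e₃]
  have eq2434 : R e₂ e₄ e₃ e₄ = R e₂ e₄ e₃ e₄ := by rw [h3s]
  have eq2442 : R e₂ e₄ e₄ e₂ = - R e₂ e₄ e₂ e₄ := by rw [h2s e₂ e₄ e₄ e₂]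
  have eq2444 : R e₂ e₄ e₄ e₄ = 0 := by linarith only [h2s e₂ e₄ e₄ e₄]
  have eq3111 : R e₃ e₁ e₁ e₁ = 0 := by linarith only [h2s e₃ e₁ e₁ e₁]
  have eq3113 : R e₃ e₁ e₁ e₃ = - R e₁ e₃ e₁ e₃ := by rw [h1s e₃ e₁ e₁ e₃]
  have eq3121 : R e₃ e₁ e₂ e₁ = R e₁ e₂ e₁ e₃ := by rw [h1s e₃ e₁ e₂ e₁, h2s e₁ e₃ e₂ e₁, h3s e₁ e₃ e₁ e₂, neg_neg]
  have eq3124 : R e₃ e₁ e₂ e₄ = - R e₁ e₃ e₂ e₄ := by rw [h1s e₃ e₁ e₂ e₄]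
  have eq3131 : R e₃ e₁ e₃ e₁ = R e₁ e₃ e₁ e₃ := by rw [h1s e₃ e₁ e₃ e₁, h2s e₁ e₃ e₃ e₁, neg_neg]
  have eq3133 : R e₃ e₁ e₃ e₃ = 0 := by linarith only [h2s e₃ e₁ e₃ e₃]
  have eq3134 : R e₃ e₁ e₃ e₄ = - R e₁ e₃ e₃ e₄ := by rw [h1s e₃ e₁ e₃ e₄]
  have eq3212 : R e₃ e₂ e₁ e₂ = - R e₁ e₂ e₂ e₃ := by rw [h1s e₃ e₂ e₁ e₂, h3s e₂ e₃ e₁ e₂]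
  have eq3214 : R e₃ e₂ e₁ e₄ = - R e₁ e₄ e₂ e₃ := by rw [h1s e₃ e₂ e₁ e₄, h3s e₂ e₃ e₁ e₄]
  have eq3222 : R e₃ e₂ e₂ e₂ = 0 := by linarith only [h2s e₃ e₂ e₂ e₂]
  have eq3223 : R e₃ e₂ e₂ e₃ = - R e₂ e₃ e₂ e₃ := by rw [h1s e₃ e₂ e₂ e₃]
  have eq3232 : R e₃ e₂ e₃ e₂ = R e₂ e₃ e₂ e₃ := by rw [h1s e₃ e₂ e₃ e₂, h2s e₂ e₃ e₃ e₂, neg_neg]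
  have eq3233 : R e₃ e₂ e₃ e₃ = 0 := by linarith only [h2s e₃ e₂ e₃ e₃]
  have eq3234 : R e₃ e₂ e₃ e₄ = - R e₂ e₃ e₃ e₄ := by rw [h1s e₃ e₂ e₃ e₄]
  have eq3311 : R e₃ e₃ e₁ e₁ = 0 := by linarith only [h1s e₃ e₃ e₁ e₁]
  have eq3313 : R e₃ e₃ e₁ e₃ = 0 := by linarith only [h1s e₃ e₃ e₁ e₃]
  have eq3322 : R e₃ e₃ e₂ e₂ = 0 := by linarith only [h1s e₃ e₃ e₂ e₂]
  have eq3323 : R e₃ e₃ e₂ e₃ = 0 := by linarith only [h1s e₃ e₃ e₂ e₃]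
  have eq3331 : R e₃ e₃ e₃ e₁ = 0 := by linarith only [h1s e₃ e₃ e₃ e₁]
  have eq3332 : R e₃ e₃ e₃ e₂ = 0 := by linarith only [h1s e₃ e₃ e₃ e₂]
  have eq3333 : R e₃ e₃ e₃ e₃ = 0 := by linarith only [h1s e₃ e₃ e₃ e₃]
  have eq3412 : R e₃ e₄ e₁ e₂ = R e₁ e₃ e₂ e₄ - R e₁ e₄ e₂ e₃ := by linarith only [h3s e₃ e₄ e₁ e₂, hb, hb2]
  have eq3414 : R e₃ e₄ e₁ e₄ = R e₁ e₄ e₃ e₄ := by rw [h3s e₃ e₄ e₁ e₄]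
  have eq3421 : R e₃ e₄ e₂ e₁ = -(R e₁ e₃ e₂ e₄ - R e₁ e₄ e₂ e₃) := by linarith only [h2s e₃ e₄ e₂ e₁, h3s e₃ e₄ e₁ e₂, hb, hb2]
  have eq3424 : R e₃ e₄ e₂ e₄ = R e₂ e₄ e₃ e₄ := by rw [h3s e₃ e₄ e₂ e₄]
  have eq3431 : R e₃ e₄ e₃ e₁ = - R e₁ e₃ e₃ e₄ := by rw [h2s e₃ e₄ e₃ e₁, h3s e₃ e₄ e₁ e₃]
  have eq3432 : R e₃ e₄ e₃ e₂ = - R e₂ e₃ e₃ e₄ := by rw [h2s e₃ e₄ e₃ e₂, h3s e₃ e₄ e₂ e₃]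
  have eq4111 : R e₄ e₁ e₁ e₁ = 0 := by linarith only [h2s e₄ e₁ e₁ e₁]
  have eq4114 : R e₄ e₁ e₁ e₄ = - R e₁ e₄ e₁ e₄ := by rw [h1s e₄ e₁ e₁ e₄]
  have eq4121 : R e₄ e₁ e₂ e₁ = R e₁ e₂ e₁ e₄ := by rw [h1s e₄ e₁ e₂ e₁, h2s e₁ e₄ e₂ e₁, h3s e₁ e₄ e₁ e₂, neg_neg]
  have eq4123 : R e₄ e₁ e₂ e₃ = - R e₁ e₄ e₂ e₃ := by rw [h1s e₄ e₁ e₂ e₃]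
  have eq4141 : R e₄ e₁ e₄ e₁ = R e₁ e₄ e₁ e₄ := by rw [h1s e₄ e₁ e₄ e₁, h2s e₁ e₄ e₄ e₁, neg_neg]
  have eq4143 : R e₄ e₁ e₄ e₃ = R e₁ e₄ e₃ e₄ := by rw [h1s e₄ e₁ e₄ e₃, h2s e₁ e₄ e₄ e₃, neg_neg]
  have eq4144 : R e₄ e₁ e₄ e₄ = 0 := by linarith only [h2s e₄ e₁ e₄ e₄]
  have eq4212 : R e₄ e₂ e₁ e₂ = - R e₁ e₂ e₂ e₄ := by rw [h1s e₄ e₂ e₁ e₂, h3s e₂ e₄ e₁ e₂]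
  have eq4213 : R e₄ e₂ e₁ e₃ = - R e₁ e₃ e₂ e₄ := by rw [h1s e₄ e₂ e₁ e₃, h3s e₂ e₄ e₁ e₃]
  have eq4222 : R e₄ e₂ e₂ e₂ = 0 := by linarith only [h2s e₄ e₂ e₂ e₂]
  have eq4224 : R e₄ e₂ e₂ e₄ = - R e₂ e₄ e₂ e₄ := by rw [h1s e₄ e₂ e₂ e₄]
  have eq4242 : R e₄ e₂ e₄ e₂ = R e₂ e₄ e₂ e₄ := by rw [h1s e₄ e₂ e₄ e₂, h2s e₂ e₄ e₄ e₂, neg_neg]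
  have eq4243 : R e₄ e₂ e₄ e₃ = R e₂ e₄ e₃ e₄ := by rw [h1s e₄ e₂ e₄ e₃, h2s e₂ e₄ e₄ e₃, neg_neg]
  have eq4244 : R e₄ e₂ e₄ e₄ = 0 := by linarith only [h2s e₄ e₂ e₄ e₄]
  have eq4312 : R e₄ e₃ e₁ e₂ = -(R e₁ e₃ e₂ e₄ - R e₁ e₄ e₂ e₃) := by linarith only [h1s e₄ e₃ e₁ e₂, h3s e₃ e₄ e₁ e₂, hb, hb2]
  have eq4313 : R e₄ e₃ e₁ e₃ = - R e₁ e₃ e₃ e₄ := by rw [h1s e₄ e₃ e₁ e₃, h3s e₃ e₄ e₁ e₃]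
  have eq4321 : R e₄ e₃ e₂ e₁ = R e₁ e₃ e₂ e₄ - R e₁ e₄ e₂ e₃ := by linarith only [h1s e₄ e₃ e₂ e₁, h2s e₃ e₄ e₂ e₁, h3s e₃ e₄ e₁ e₂, hb, hb2]
  have eq4323 : R e₄ e₃ e₂ e₃ = - R e₂ e₃ e₃ e₄ := by rw [h1s e₄ e₃ e₂ e₃, h3s e₃ e₄ e₂ e₃]
  have eq4341 : R e₄ e₃ e₄ e₁ = R e₁ e₄ e₃ e₄ := by rw [h1s e₄ e₃ e₄ e₁, h2s e₃ e₄ e₄ e₁, h3s e₃ e₄ e₁ e₄, neg_neg]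
  have eq4342 : R e₄ e₃ e₄ e₂ = R e₂ e₄ e₃ e₄ := by rw [h1s e₄ e₃ e₄ e₂, h2s e₃ e₄ e₄ e₂, h3s e₃ e₄ e₂ e₄, neg_neg]
  have eq4343 : R e₄ e₃ e₄ e₃ = R e₃ e₄ e₃ e₄ := by rw [h1s e₄ e₃ e₄ e₃, h2s e₃ e₄ e₄ e₃, neg_neg]
  have eq4411 : R e₄ e₄ e₁ e₁ = 0 := by linarith only [h1s e₄ e₄ e₁ e₁]
  have eq4414 : R e₄ e₄ e₁ e₄ = 0 := by linarith only [h1s e₄ e₄ e₁ e₄]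
  have eq4422 : R e₄ e₄ e₂ e₂ = 0 := by linarith only [h1s e₄ e₄ e₂ e₂]
  have eq4424 : R e₄ e₄ e₂ e₄ = 0 := by linarith only [h1s e₄ e₄ e₂ e₄]
  have eq4441 : R e₄ e₄ e₄ e₁ = 0 := by linarith only [h1s e₄ e₄ e₄ e₁]
  have eq4442 : R e₄ e₄ e₄ e₂ = 0 := by linarith only [h1s e₄ e₄ e₄ e₂]
  have eq4444 : R e₄ e₄ e₄ e₄ = 0 := by linarith only [h1s e₄ e₄ e₄ e₄]
  have hypS := hyp e₁ e₂ e₃ e₄ ⟨hn1, hn2, hn3, hn4, h12, h13, h14, h23, h24, h34⟩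
  rw [expA13, expA14, expA23, expA24, expA12, expA34] at hypA
  rw [expB13, expB14, expB23, expB24, expB12, expB34] at hypB
  simp only [eq1111, eq1113, eq1114, eq1131, eq1133, eq1141, eq1144, eq1213, eq1214, eq1232, eq1234, eq1242, eq1243, eq1311, eq1312, eq1331, eq1333, eq1342, eq1343, eq1411, eq1412, eq1432, eq1434, eq1441, eq1444, eq2121, eq2123, eq2124, eq2131, eq2134, eq2141, eq2143, eq2222, eq2223, eq2224, eq2232, eq2233, eq2242, eq2244, eq2321, eq2322, eq2332, eq2333, eq2341, eq2343, eq2421, eq2422, eq2431, eq2434, eq2442, eq2444, eq3111, eq3113, eq3121, eq3124, eq3131, eq3133, eq3134, eq3212, eq3214, eq3222, eq3223, eq3232, eq3233, eq3234, eq3311, eq3313, eq3322, eq3323, eq3331, eq3332, eq3333, eq3412, eq3414, eq3421, eq3424, eq3431, eq3432, eq4111, eq4114, eq4121, eq4123, eq4141, eq4143, eq4144, eq4212, eq4213, eq4222, eq4224, eq4242, eq4243, eq4244, eq4312, eq4313, eq4321, eq4323, eq4341, eq4342, eq4343, eq4411, eq4414, eq4422, eq4424, eq4441, eq4442, eq4444]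 at hypA hypB
  linarith only [hypS, hypA, hypB, eq1234]
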